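/- There exists a constant C > 0 such that for all B > 0 and all w ∈ ℝ one has |S_B(w) − (2/5)·(w)₊^(5/2) − (1/2)·B²·(w)₊^(1/2)| ≤ C·B^(5/2). (Second-order approximation of the magnetic pressure by the non-magnetic pressure plus a B²-correction, equation (25-3-30).) -/

import Mathlib

/-- The magnetic Thomas–Fermi pressure. -/
noncomputable def S (B w : ℝ) : ℝ :=
  2 * B * ((1 / 2) * (max w 0) ^ ((3 : ℝ) / 2) +
    ∑' j : ℕ, (max (w - 2 * ((j : ℝ) + 1) * B) 0) ^ ((3 : ℝ) / 2))

noncomputable def MTF_Err (B w : ℝ) : ℝ :=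
  S B w - (2 / 5) * (max w 0) ^ ((5 : ℝ) / 2) - (1 / 2) * B ^ 2 * (max w 0) ^ ((1 : ℝ) / 2)

lemma MTF_r12 (x : ℝ) : x ^ ((1:ℝ)/2) = Real.sqrt x :=
  (Real.sqrt_eq_rpow x).symm

lemma MTF_rodd (x : ℝ) (hx : 0 ≤ x) (n : ℕ) : x ^ ((n:ℝ)/2) = Real.sqrt x ^ n := by
  rw [show ((n:ℝ)/2) = (1/2)*(n:ℝ) by ring, Real.rpow_mul hx, Real.rpow_natCast,
    MTF_r12 x]

lemma MTF_r32 (x : ℝ) (hx : 0 ≤ x) : x ^ ((3:ℝ)/2) = Real.sqrt x ^ 3 := by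
  rw [show ((3:ℝ)/2) = ((3:ℕ):ℝ)/2 by norm_num]; exact MTF_rodd x hx 3

lemma MTF_r52 (x : ℝ) (hx : 0 ≤ x) : x ^ ((5:ℝ)/2) = Real.sqrt x ^ 5 := by
  rw [show ((5:ℝ)/2) = ((5:ℕ):ℝ)/2 by norm_num]; exact MTF_rodd x hx 5

lemma MTF_summable (B w : ℝ) (hB : 0 < B) :
    Summable (fun j : ℕ => (max (w - 2 * ((j : ℝ) + 1) * B) 0) ^ ((3 : ℝ) / 2)) := by
  apply summable_of_ne_finset_zero (s := Finset.range ⌈w / (2*B)⌉₊)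
  intro j hj
  rw [Finset.mem_range, not_lt] at hj
  have h1 : w / (2*B) ≤ (j:ℝ) := le_trans (Nat.le_ceil _) (by exact_mod_cast hj)
  have hB2 : (0:ℝ) < 2*B := by linarith
  have h2 : w - 2*((j:ℝ)+1)*B ≤ 0 := by
    have := (div_le_iff₀ hB2).mp h1
    nlinarith
  rw [max_eq_right h2, Real.zero_rpow (by norm_num)]

lemma MTF_S_rec (B w : ℝ) (hB : 0 < B) :
    S B w = B * (max w 0) ^ ((3:ℝ)/2) + B * (max (w - 2*B) 0) ^ ((3:ℝ)/2)
      + S B (w - 2*B) := by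
  have hs := MTF_summable B w hB
  have h0 := Summable.tsum_eq_zero_add hs
  push_cast at h0
  have ht : (∑' j : ℕ, (max (w - 2 * ((j:ℝ) + 1 + 1) * B) 0) ^ ((3:ℝ)/2))
      = ∑' j : ℕ, (max ((w - 2*B) - 2 * ((j : ℝ) + 1) * B) 0) ^ ((3:ℝ)/2) := by
    apply tsum_congr
    intro j
    congr 2
    ring
  rw [ht] at h0
  have h00 : w - 2 * ((0:ℝ) + 1) * B = w - 2*B := by ring
  rw [h00] at h0
  unfold S
  rw [h0]
  ring

lemma MTF_poly (u v b : ℝ) (h : u^2 - v^2 = 2*b) :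
    b*(u^3+v^3) - (2/5)*(u^5-v^5) - (1/2)*b^2*(u-v) = -((u-v)^5)/40 := by
  have hb : b = (u^2 - v^2)/2 := by linarith
  subst hb
  ring

lemma MTF_Err_rec (B w : ℝ) (hB : 0 < B) (hw : 2*B ≤ w) :
    MTF_Err B w = -((Real.sqrt w - Real.sqrt (w - 2*B))^5)/40 + MTF_Err B (w - 2*B) := by
  have h0 : (0:ℝ) ≤ w - 2*B := by linarith
  have hw0 : (0:ℝ) ≤ w := by linarith
  have hu : Real.sqrt w ^ 2 = w := Real.sq_sqrt hw0
  have hv : Real.sqrt (w-2*B) ^ 2 = w - 2*B := Real.sq_sqrt h0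
  have hp := MTF_poly (Real.sqrt w) (Real.sqrt (w-2*B)) B (by rw [hu, hv]; ring)
  unfold MTF_Err
  rw [MTF_S_rec B w hB, max_eq_left hw0, max_eq_left h0, MTF_r32 w hw0, MTF_r32 _ h0,
    MTF_r52 w hw0, MTF_r52 _ h0, MTF_r12 w, MTF_r12 _]
  linear_combination hp

lemma MTF_S_small (B w : ℝ) (hB : 0 < B) (h2 : w ≤ 2*B) :
    S B w = B * (max w 0) ^ ((3:ℝ)/2) := by
  unfold S
  have hz : ∀ j : ℕ, (max (w - 2*((j:ℝ)+1)*B) 0) ^ ((3:ℝ)/2) = 0 := by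
    intro j
    have hj : (0:ℝ) ≤ (j:ℝ) := Nat.cast_nonneg j
    have : w - 2*((j:ℝ)+1)*B ≤ 0 := by nlinarith
    rw [max_eq_right this, Real.zero_rpow (by norm_num)]
  rw [tsum_congr hz, tsum_zero]
  ring

lemma MTF_Err_base (B w : ℝ) (hB : 0 < B) (h0 : 0 < w) (h2 : w ≤ 2*B) :
    |MTF_Err B w| ≤ 6 * (B^2 * Real.sqrt B) := by
  have hw0 : (0:ℝ) ≤ w := h0.le
  have hu2 : Real.sqrt w ^ 2 = w := Real.sq_sqrt hw0
  have hun : 0 ≤ Real.sqrt w := Real.sqrt_nonneg w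
  have hb2 : Real.sqrt B ^ 2 = B := Real.sq_sqrt hB.le
  have hbn : 0 ≤ Real.sqrt B := Real.sqrt_nonneg B
  set u := Real.sqrt w
  set b := Real.sqrt B
  have h2' : Real.sqrt 2 ^ 2 = 2 := Real.sq_sqrt (by norm_num)
  have h2n : 0 ≤ Real.sqrt 2 := Real.sqrt_nonneg 2
  have hs2 : Real.sqrt 2 ≤ 3/2 := by nlinarith
  have hub : u ≤ (3/2) * b := by
    have := Real.sqrt_le_sqrt h2
    rw [Real.sqrt_mul (by norm_num : (0:ℝ) ≤ 2) B] at this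
    nlinarith
  have husq : u ^ 2 ≤ 2 * b ^ 2 := by rw [hu2, hb2]; linarith
  have hu3 : B * u^3 ≤ 3 * B^2 * b := by
    have e1 : B * u^3 ≤ B * (2*b^2*u) := by nlinarith [mul_nonneg hun (sub_nonneg.mpr husq)]
    have e2 : B * (2*b^2*u) = 2*B^2*u := by rw [← hb2]; ring
    have e3 : 2*B^2*u ≤ 3*B^2*b := by nlinarith [sq_nonneg B]
    linarith
  have hu5 : (2/5) * u^5 ≤ (12/5) * B^2 * b := by
    have e0 : u^4 ≤ 4*b^4 := by nlinarith
    have e1 : u^5 ≤ 4*b^4*u := by nlinarith [mul_nonneg hun (sub_nonneg.mpr e0)]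
    have e2 : 4*b^4*u ≤ 6*b^4*b := by nlinarith [pow_nonneg hbn 4]
    have e3 : (6:ℝ)*b^4*b = 6*B^2*b := by rw [← hb2]; ring
    nlinarith
  have hu1 : (1/2) * B^2 * u ≤ (3/4) * B^2 * b := by nlinarith [sq_nonneg B]
  have hQn : 0 ≤ B^2*b := by positivity
  have hnn3 : 0 ≤ B * u^3 := by positivity
  have hnn5 : 0 ≤ (2/5) * u^5 := by positivity
  have hnn1 : 0 ≤ (1/2) * B^2 * u := by positivity
  unfold MTF_Err
  rw [MTF_S_small B w hB h2, max_eq_left hw0, MTF_r32 w hw0, MTF_r52 w hw0, MTF_r12 w]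
  rw [abs_le]
  constructor <;> linarith

set_option maxHeartbeats 1000000 in
lemma MTF_step (B w t : ℝ) (hB : 0 < B) (ht : 1 ≤ t) (hw : 2*t*B ≤ w) :
    (Real.sqrt w - Real.sqrt (w - 2*B))^5 ≤ 20 * (B^2 * Real.sqrt B) / (t*(t+1)) := by
  have htB : 0 < t*B := by nlinarith
  have hy0 : (0:ℝ) ≤ w - 2*B := by nlinarith
  have hw0 : (0:ℝ) < w := by nlinarith
  set u := Real.sqrt w with hudef
  set v := Real.sqrt (w - 2*B) with hvdef
  set r := Real.sqrt B with hrdef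
  set s := Real.sqrt t with hsdef
  have hu2 : u ^ 2 = w := Real.sq_sqrt hw0.le
  have hv2 : v ^ 2 = w - 2*B := Real.sq_sqrt hy0
  have hr2 : r ^ 2 = B := Real.sq_sqrt hB.le
  have hs2 : s ^ 2 = t := Real.sq_sqrt (by linarith)
  have hun : 0 ≤ u := Real.sqrt_nonneg _
  have hvn : 0 ≤ v := Real.sqrt_nonneg _
  have hrn : 0 ≤ r := Real.sqrt_nonneg _
  have hsn : 0 ≤ s := Real.sqrt_nonneg _
  have hs1 : 1 ≤ s := by nlinarith
  have hd : 0 ≤ u - v := by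
    have := Real.sqrt_le_sqrt (show w - 2*B ≤ w by linarith)
    linarith
  have hd5n : 0 ≤ (u-v)^5 := by positivity
  have hdu : (u - v) * u ≤ 2 * B := by nlinarith [mul_nonneg hd hvn]
  have hsr : s * r ≤ u := by
    have h1 : t*B ≤ w := by nlinarith
    have h2 := Real.sqrt_le_sqrt h1
    rw [Real.sqrt_mul (by linarith : (0:ℝ) ≤ t) B] at h2
    exact h2
  have hu5 : 4*t^2*B^2*(s*r) ≤ u^5 := by
    have h1 : (2*t*B)^2 ≤ (u^2)^2 := by nlinarith
    have h2 : (2*t*B)^2*(s*r) ≤ (u^2)^2*u :=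
      mul_le_mul h1 hsr (mul_nonneg hsn hrn) (by positivity)
    calc 4*t^2*B^2*(s*r) = (2*t*B)^2*(s*r) := by ring
      _ ≤ (u^2)^2*u := h2
      _ = u^5 := by ring
  have hdu5 : (u-v)^5 * u^5 ≤ 32 * B^5 := by
    have h1 : ((u-v)*u)^5 ≤ (2*B)^5 :=
      pow_le_pow_left₀ (mul_nonneg hd hun) hdu 5
    rw [mul_pow, mul_pow] at h1
    norm_num at h1
    linarith
  have key : (u-v)^5 * (4*t^2*B^2*(s*r)) ≤ 32 * B^5 :=
    le_trans (mul_le_mul_of_nonneg_left hu5 hd5n) hdu5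
  have hB5 : (32:ℝ) * B^5 = 32 * (B^2*r)^2 := by rw [← hr2]; ring
  have hq : 0 ≤ (u-v)^5 * t^2 * (B^2*r) := by positivity
  have key2 : (u-v)^5 * t^2 * (B^2 * r) ≤ 8 * (B^2*r)^2 := by
    have e1 : (u-v)^5 * t^2 * (B^2*r) * 1 ≤ (u-v)^5 * t^2 * (B^2*r) * s :=
      mul_le_mul_of_nonneg_left hs1 hq
    have e2 : (u-v)^5 * t^2 * (B^2*r) * s * 4 = (u-v)^5 * (4*t^2*B^2*(s*r)) := by ring
    nlinarith
  have hr0 : 0 < r := Real.sqrt_pos.mpr hB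
  have hQ : 0 < B^2 * r := by positivity
  have key3 : (u-v)^5 * t^2 ≤ 8 * (B^2*r) :=
    (mul_le_mul_iff_of_pos_right hQ).mp (by linear_combination key2)
  rw [le_div_iff₀ (by nlinarith : (0:ℝ) < t*(t+1))]
  have e4 : (u-v)^5 * (t*(t+1)) ≤ 2*((u-v)^5 * t^2) := by
    nlinarith [mul_nonneg (mul_nonneg hd5n (show (0:ℝ) ≤ t by linarith))
      (show (0:ℝ) ≤ t - 1 by linarith)]
  linarith

lemma MTF_main_ind (B : ℝ) (hB : 0 < B) : ∀ n : ℕ, ∀ w : ℝ, 0 < w → w ≤ 2*((n:ℝ)+1)*B →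
    |MTF_Err B w| ≤ (6 + (1/2) * (1 - 1/((n:ℝ)+1))) * (B^2 * Real.sqrt B) := by
  intro n
  induction n with
  | zero =>
    intro w h0 h2
    norm_num at h2 ⊢
    exact MTF_Err_base B w hB h0 (by linarith)
  | succ n ih =>
    intro w h0 h2
    push_cast at h2 ⊢
    have hQ : (0:ℝ) ≤ B^2 * Real.sqrt B := by positivity
    have hn0 : (0:ℝ) ≤ (n:ℝ) := Nat.cast_nonneg n
    rcases le_or_gt w (2*((n:ℝ)+1)*B) with hle | hgt
    · refine (ih w h0 hle).trans ?_
      have hmono : 1/((n:ℝ)+1+1) ≤ 1/((n:ℝ)+1) := by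
        apply one_div_le_one_div_of_le <;> linarith
      have : (6 + (1/2) * (1 - 1/((n:ℝ)+1))) ≤ (6 + (1/2) * (1 - 1/((n:ℝ)+1+1))) := by
        linarith
      exact mul_le_mul_of_nonneg_right this hQ
    · have hn1 : (1:ℝ) ≤ (n:ℝ)+1 := by linarith
      have hw2B : 2*B ≤ w := by nlinarith
      have hrec := MTF_Err_rec B w hB hw2B
      have hstep := MTF_step B w ((n:ℝ)+1) hB hn1 (by linarith)
      have hprev := ih (w - 2*B) (by nlinarith) (by linarith)
      have hd : 0 ≤ Real.sqrt w - Real.sqrt (w - 2*B) := by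
        have := Real.sqrt_le_sqrt (show w - 2*B ≤ w by linarith)
        linarith
      have hd5 : 0 ≤ (Real.sqrt w - Real.sqrt (w - 2*B))^5 := by positivity
      have habs : |MTF_Err B w| ≤ (Real.sqrt w - Real.sqrt (w - 2*B))^5/40
          + |MTF_Err B (w - 2*B)| := by
        rw [hrec]
        refine (abs_add_le _ _).trans ?_
        rw [abs_div, abs_neg, abs_of_nonneg hd5]
        norm_num
      have hpos1 : (0:ℝ) < (n:ℝ)+1 := by linarith
      have hpos2 : (0:ℝ) < (n:ℝ)+1+1 := by linarith
      have e1 : 20 * (B^2 * Real.sqrt B) / (((n:ℝ)+1)*(((n:ℝ)+1)+1)) / 40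
          = (1/2) * (1/((n:ℝ)+1) - 1/((n:ℝ)+1+1)) * (B^2 * Real.sqrt B) := by
        field_simp
        ring
      have hstep' : (Real.sqrt w - Real.sqrt (w - 2*B))^5/40
          ≤ (1/2) * (1/((n:ℝ)+1) - 1/((n:ℝ)+1+1)) * (B^2 * Real.sqrt B) := by
        rw [← e1]; linarith
      calc |MTF_Err B w| ≤ (Real.sqrt w - Real.sqrt (w - 2*B))^5/40
          + |MTF_Err B (w - 2*B)| := habs
        _ ≤ (1/2) * (1/((n:ℝ)+1) - 1/((n:ℝ)+1+1)) * (B^2 * Real.sqrt B)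
            + (6 + (1/2) * (1 - 1/((n:ℝ)+1))) * (B^2 * Real.sqrt B) := by linarith
        _ = (6 + (1/2) * (1 - 1/((n:ℝ)+1+1))) * (B^2 * Real.sqrt B) := by ring

lemma MTF_S_nonpos (B w : ℝ) (hB : 0 < B) (hw : w ≤ 0) : S B w = 0 := by
  unfold S
  have hz : ∀ j : ℕ, (max (w - 2*((j:ℝ)+1)*B) 0) ^ ((3:ℝ)/2) = 0 := by
    intro j
    have hj : (0:ℝ) ≤ (j:ℝ) := Nat.cast_nonneg j
    have : w - 2*((j:ℝ)+1)*B ≤ 0 := by nlinarith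
    rw [max_eq_right this, Real.zero_rpow (by norm_num)]
  rw [tsum_congr hz, tsum_zero, max_eq_right hw, Real.zero_rpow (by norm_num)]
  ring

/-- Second-order approximation of the magnetic pressure by the non-magnetic
pressure plus a `B²`-correction (equation (25-3-30)): there is `C > 0` such that
for all `B > 0` and `w ∈ ℝ`,
`|S_B(w) − (2/5)·(w)₊^(5/2) − (1/2)·B²·(w)₊^(1/2)| ≤ C·B^(5/2)`. -/
theorem magnetic_pressure_second_order_approx :
    ∃ C : ℝ, 0 < C ∧ ∀ B : ℝ, 0 < B → ∀ w : ℝ,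
      |S B w - (2 / 5) * (max w 0) ^ ((5 : ℝ) / 2)
          - (1 / 2) * B ^ 2 * (max w 0) ^ ((1 : ℝ) / 2)|
        ≤ C * B ^ ((5 : ℝ) / 2) := by
  refine ⟨7, by norm_num, ?_⟩
  intro B hB w
  have hb52 : B ^ ((5:ℝ)/2) = B^2 * Real.sqrt B := by
    rw [show ((5:ℝ)/2) = ((2:ℕ):ℝ) + (1:ℝ)/2 by norm_num, Real.rpow_add hB,
      Real.rpow_natCast, MTF_r12 B]
  show |MTF_Err B w| ≤ 7 * B ^ ((5:ℝ)/2)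
  rcases le_or_gt w 0 with h | h
  · unfold MTF_Err
    rw [MTF_S_nonpos B w hB h, max_eq_right h, Real.zero_rpow (by norm_num),
      Real.zero_rpow (by norm_num)]
    simp only [mul_zero, sub_zero, abs_zero, zero_sub, zero_mul, neg_zero]
    positivity
  · set n := ⌈w / (2*B)⌉₊ with hn
    have hB2 : (0:ℝ) < 2*B := by linarith
    have hn0 : (0:ℝ) ≤ (n:ℝ) := Nat.cast_nonneg n
    have hwn : w ≤ 2*((n:ℝ)+1)*B := by
      have h1 : w / (2*B) ≤ (n:ℝ) := Nat.le_ceil _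
      have := (div_le_iff₀ hB2).mp h1
      nlinarith
    have hmain := MTF_main_ind B hB n w h hwn
    rw [hb52]
    have hQ : (0:ℝ) ≤ B^2 * Real.sqrt B := by positivity
    have hpos : (0:ℝ) < 1/((n:ℝ)+1) := by positivity
    have hle1 : 1/((n:ℝ)+1) ≤ 1 := by
      rw [div_le_one (by positivity)]
      linarith
    have hco : (6 + (1/2) * (1 - 1/((n:ℝ)+1))) ≤ 7 := by linarith
    exact hmain.trans (mul_le_mul_of_nonneg_right hco hQ)
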